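/- Let (Q_j)_{j∈J} be a collection of kinetic cylinders Q_{r_j}(z_j) in (−∞,0]×ℝᵈ×ℝᵈ with uniformly bounded radii. Then there exists a countable subset I ⊆ J such that the cylinders (Q_i)_{i∈I} are pairwise disjoint and ⋃_{j∈J} Q_j ⊆ ⋃_{i∈I} 5Q_i, where 5Q_{r}(z₀) := Q_{5r}(z₀ ∘ (min(−t₀,12r²),0,0)). -/

import Mathlib

/-- The Galilean group law on `ℝ × ℝᵈ × ℝᵈ`. -/
noncomputable def kMul {d : ℕ} (z₀ z : ℝ × EuclideanSpace ℝ (Fin d) × EuclideanSpace ℝ (Fin d)) :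
    ℝ × EuclideanSpace ℝ (Fin d) × EuclideanSpace ℝ (Fin d) :=
  (z₀.1 + z.1, z₀.2.1 + z.2.1 + z.1 • z₀.2.2, z₀.2.2 + z.2.2)

/-- The kinetic cylinder of radius `r` centered at `z₀`. -/
def kCyl {d : ℕ} (r : ℝ) (z₀ : ℝ × EuclideanSpace ℝ (Fin d) × EuclideanSpace ℝ (Fin d)) :
    Set (ℝ × EuclideanSpace ℝ (Fin d) × EuclideanSpace ℝ (Fin d)) :=
  {z | -r ^ 2 < z.1 - z₀.1 ∧ z.1 - z₀.1 ≤ 0 ∧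
    ‖z.2.1 - z₀.2.1 - (z.1 - z₀.1) • z₀.2.2‖ < r ^ 3 ∧ ‖z.2.2 - z₀.2.2‖ < r}

/-- The shifted and scaled cylinder `5Q_r(z₀)`. -/
noncomputable def kCyl5 {d : ℕ} (r : ℝ)
    (z₀ : ℝ × EuclideanSpace ℝ (Fin d) × EuclideanSpace ℝ (Fin d)) :
    Set (ℝ × EuclideanSpace ℝ (Fin d) × EuclideanSpace ℝ (Fin d)) :=
  kCyl (5 * r) (kMul z₀ (min (-z₀.1) (12 * r ^ 2), 0, 0))

lemma kCyl_self_mem {d : ℕ} {r : ℝ} (hr : 0 < r)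
    (z₀ : ℝ × EuclideanSpace ℝ (Fin d) × EuclideanSpace ℝ (Fin d)) :
    z₀ ∈ kCyl r z₀ := by
  refine ⟨by nlinarith, by simp, ?_, by simpa using hr⟩
  simpa using by positivity

/-- The key geometric lemma: if `Q_{r_a}(z_a)` intersects `Q_{r_b}(z_b)` and `r_a ≤ 2 r_b`,
then `Q_{r_a}(z_a) ⊆ 5Q_{r_b}(z_b)`. -/
lemma kCyl_subset_kCyl5 {d : ℕ}
    {za zb : ℝ × EuclideanSpace ℝ (Fin d) × EuclideanSpace ℝ (Fin d)} {ra rb : ℝ}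
    (hra : 0 < ra) (hrb : 0 < rb) (hta : za.1 ≤ 0) (htb : zb.1 ≤ 0)
    (hab : ra ≤ 2 * rb) (hne : (kCyl ra za ∩ kCyl rb zb).Nonempty) :
    kCyl ra za ⊆ kCyl5 rb zb := by
  obtain ⟨w, hwa, hwb⟩ := hne
  obtain ⟨hw1, hw2, hw3, hw4⟩ := hwa
  obtain ⟨hv1, hv2, hv3, hv4⟩ := hwb
  intro p hp
  obtain ⟨h1, h2, h3, h4⟩ := hp
  set s : ℝ := min (-zb.1) (12 * rb ^ 2) with hs
  have hs0 : 0 ≤ s := le_min (by linarith) (by positivity)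
  have hs12 : s ≤ 12 * rb ^ 2 := min_le_right _ _
  have hp0 : p.1 ≤ 0 := by linarith
  refine ⟨?_, ?_, ?_, ?_⟩
  · -- lower time bound
    show -(5 * rb) ^ 2 < p.1 - (zb.1 + s)
    nlinarith [sq_nonneg rb, sq_nonneg ra]
  · -- upper time bound
    show p.1 - (zb.1 + s) ≤ 0
    have : p.1 - zb.1 ≤ s := le_min (by linarith) (by nlinarith)
    linarith
  · -- position bound
    show ‖p.2.1 - (zb.2.1 + (0 : EuclideanSpace ℝ (Fin d)) + s • zb.2.2)
        - (p.1 - (zb.1 + s)) • (zb.2.2 + 0)‖ < (5 * rb) ^ 3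
    have hid : p.2.1 - (zb.2.1 + (0 : EuclideanSpace ℝ (Fin d)) + s • zb.2.2)
        - (p.1 - (zb.1 + s)) • (zb.2.2 + 0)
        = (p.2.1 - za.2.1 - (p.1 - za.1) • za.2.2)
          - (w.2.1 - za.2.1 - (w.1 - za.1) • za.2.2)
          + (w.2.1 - zb.2.1 - (w.1 - zb.1) • zb.2.2)
          + (p.1 - w.1) • (za.2.2 - zb.2.2) := by
      module
    rw [hid]
    have hT : |p.1 - w.1| ≤ ra ^ 2 := by
      rw [abs_le]; constructor <;> linarith
    have hV : ‖za.2.2 - zb.2.2‖ ≤ ra + rb := by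
      have : za.2.2 - zb.2.2 = -(w.2.2 - za.2.2) + (w.2.2 - zb.2.2) := by abel
      rw [this]
      calc ‖-(w.2.2 - za.2.2) + (w.2.2 - zb.2.2)‖
          ≤ ‖-(w.2.2 - za.2.2)‖ + ‖w.2.2 - zb.2.2‖ := norm_add_le _ _
        _ = ‖w.2.2 - za.2.2‖ + ‖w.2.2 - zb.2.2‖ := by rw [norm_neg]
        _ ≤ ra + rb := by linarith
    have hD : ‖(p.1 - w.1) • (za.2.2 - zb.2.2)‖ ≤ ra ^ 2 * (ra + rb) := by
      rw [norm_smul, Real.norm_eq_abs]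
      exact mul_le_mul hT hV (norm_nonneg _) (by positivity)
    calc ‖(p.2.1 - za.2.1 - (p.1 - za.1) • za.2.2)
          - (w.2.1 - za.2.1 - (w.1 - za.1) • za.2.2)
          + (w.2.1 - zb.2.1 - (w.1 - zb.1) • zb.2.2)
          + (p.1 - w.1) • (za.2.2 - zb.2.2)‖
        ≤ ‖(p.2.1 - za.2.1 - (p.1 - za.1) • za.2.2)
          - (w.2.1 - za.2.1 - (w.1 - za.1) • za.2.2)
          + (w.2.1 - zb.2.1 - (w.1 - zb.1) • zb.2.2)‖
          + ‖(p.1 - w.1) • (za.2.2 - zb.2.2)‖ := norm_add_le _ _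
      _ ≤ ‖(p.2.1 - za.2.1 - (p.1 - za.1) • za.2.2)
          - (w.2.1 - za.2.1 - (w.1 - za.1) • za.2.2)‖
          + ‖w.2.1 - zb.2.1 - (w.1 - zb.1) • zb.2.2‖
          + ‖(p.1 - w.1) • (za.2.2 - zb.2.2)‖ := by
          gcongr; exact norm_add_le _ _
      _ ≤ ‖p.2.1 - za.2.1 - (p.1 - za.1) • za.2.2‖
          + ‖w.2.1 - za.2.1 - (w.1 - za.1) • za.2.2‖
          + ‖w.2.1 - zb.2.1 - (w.1 - zb.1) • zb.2.2‖
          + ‖(p.1 - w.1) • (za.2.2 - zb.2.2)‖ := by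
          gcongr; exact norm_sub_le _ _
      _ < (5 * rb) ^ 3 := by
          have e1 : ra ^ 3 ≤ (2 * rb) ^ 3 := pow_le_pow_left₀ hra.le hab 3
          have e2 : ra ^ 2 ≤ (2 * rb) ^ 2 := pow_le_pow_left₀ hra.le hab 2
          have e3 : ra ^ 2 * (ra + rb) ≤ (2 * rb) ^ 2 * (3 * rb) :=
            mul_le_mul e2 (by linarith) (by positivity) (by positivity)
          nlinarith
  · -- velocity bound
    show ‖p.2.2 - (zb.2.2 + 0)‖ < 5 * rb
    have hid : p.2.2 - (zb.2.2 + (0 : EuclideanSpace ℝ (Fin d)))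
        = (p.2.2 - za.2.2) - (w.2.2 - za.2.2) + (w.2.2 - zb.2.2) := by abel
    rw [hid]
    calc ‖(p.2.2 - za.2.2) - (w.2.2 - za.2.2) + (w.2.2 - zb.2.2)‖
        ≤ ‖(p.2.2 - za.2.2) - (w.2.2 - za.2.2)‖ + ‖w.2.2 - zb.2.2‖ := norm_add_le _ _
      _ ≤ ‖p.2.2 - za.2.2‖ + ‖w.2.2 - za.2.2‖ + ‖w.2.2 - zb.2.2‖ := by
          gcongr; exact norm_sub_le _ _
      _ < 5 * rb := by linarith

lemma kCyl_interior_nonempty {d : ℕ} {r : ℝ} (hr : 0 < r)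
    (z₀ : ℝ × EuclideanSpace ℝ (Fin d) × EuclideanSpace ℝ (Fin d)) :
    (interior (kCyl r z₀)).Nonempty := by
  have hopen : IsOpen {q : ℝ × EuclideanSpace ℝ (Fin d) × EuclideanSpace ℝ (Fin d) |
      -r ^ 2 < q.1 - z₀.1 ∧ q.1 - z₀.1 < 0 ∧
      ‖q.2.1 - z₀.2.1 - (q.1 - z₀.1) • z₀.2.2‖ < r ^ 3 ∧ ‖q.2.2 - z₀.2.2‖ < r} := by
    apply IsOpen.inter
    · exact isOpen_lt continuous_const (continuous_fst.sub continuous_const)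
    apply IsOpen.inter
    · exact isOpen_lt (continuous_fst.sub continuous_const) continuous_const
    apply IsOpen.inter
    · exact isOpen_lt (Continuous.norm (((continuous_snd.fst).sub continuous_const).sub
        ((continuous_fst.sub continuous_const).smul continuous_const))) continuous_const
    · exact isOpen_lt (Continuous.norm ((continuous_snd.snd).sub continuous_const))
        continuous_const
  have hsub : {q : ℝ × EuclideanSpace ℝ (Fin d) × EuclideanSpace ℝ (Fin d) |
      -r ^ 2 < q.1 - z₀.1 ∧ q.1 - z₀.1 < 0 ∧
      ‖q.2.1 - z₀.2.1 - (q.1 - z₀.1) • z₀.2.2‖ < r ^ 3 ∧ ‖q.2.2 - z₀.2.2‖ < r}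
      ⊆ kCyl r z₀ := fun q ⟨a, b, c, e⟩ => ⟨a, b.le, c, e⟩
  refine ⟨(z₀.1 - r ^ 2 / 2, z₀.2.1 + (-(r ^ 2 / 2)) • z₀.2.2, z₀.2.2), ?_⟩
  apply interior_mono hsub
  rw [hopen.interior_eq]
  refine ⟨by simp; nlinarith, by simp; positivity, ?_, by simp [hr]⟩
  have : z₀.2.1 + (-(r ^ 2 / 2)) • z₀.2.2 - z₀.2.1
      - (z₀.1 - r ^ 2 / 2 - z₀.1) • z₀.2.2 = 0 := by module
  simp only [this]
  simpa using by positivity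

theorem stmt1 {d : ℕ} {J : Type*}
    (z : J → ℝ × EuclideanSpace ℝ (Fin d) × EuclideanSpace ℝ (Fin d))
    (r : J → ℝ)
    (ht : ∀ j, (z j).1 ≤ 0) (hr : ∀ j, 0 < r j)
    (hbd : ∃ M : ℝ, ∀ j, r j ≤ M) :
    ∃ I : Set J, I.Countable ∧
      (I.PairwiseDisjoint fun i => kCyl (r i) (z i)) ∧
      (⋃ j, kCyl (r j) (z j)) ⊆ ⋃ i ∈ I, kCyl5 (r i) (z i) := by
  obtain ⟨M, hM⟩ := hbd
  obtain ⟨u, -, hdisj, hcov⟩ :=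
    Vitali.exists_disjoint_subfamily_covering_enlargement
      (fun j => kCyl (r j) (z j)) Set.univ r 2 (by norm_num)
      (fun j _ => (hr j).le) M (fun j _ => hM j)
      (fun j _ => ⟨z j, kCyl_self_mem (hr j) (z j)⟩)
  refine ⟨u, ?_, hdisj, ?_⟩
  · exact hdisj.countable_of_nonempty_interior
      (fun i _ => kCyl_interior_nonempty (hr i) (z i))
  · rintro p hp
    rw [Set.mem_iUnion] at hp
    obtain ⟨j, hpj⟩ := hp
    obtain ⟨b, hbu, hint, hle⟩ := hcov j (Set.mem_univ j)
    exact Set.mem_biUnion hbu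
      (kCyl_subset_kCyl5 (hr j) (hr b) (ht j) (ht b) hle hint hpj)
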